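/- arXiv:1510.00911 — 2 statements merged into one kernel-verified Lean document; each statement's English description precedes it below -/
import Mathlib

section
/- Every finite semiconnected retractable automaton containing a kernel is isomorphic to an automaton (A_i, X, δ_i; φ_{i,j}, T) of the Construction, where T is the tree of principal factors ordered by inclusion of the corresponding principal subautomata. -/
universe u v

/-- The transition function extended to words (`X*`). -/
def deltaStar {A X : Type*} (δ : A → X → A) : A → List X → A
  | a, [] => a
  | a, x :: p => deltaStar δ (δ a x) p

/-- `B` is a subautomaton of the automaton with transition `δ`. -/
def IsSubaut {A X : Type*} (δ : A → X → A) (B : Set A) : Prop :=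
  B.Nonempty ∧ ∀ b ∈ B, ∀ x : X, δ b x ∈ B

/-- `φ` is a retract homomorphism of the automaton onto the subautomaton `B`:
a homomorphism of `A` onto `B` leaving the elements of `B` fixed. -/
def IsRetractHom {A X : Type*} (δ : A → X → A) (B : Set A) (φ : A → A) : Prop :=
  (∀ a, φ a ∈ B) ∧ (∀ b ∈ B, φ b = b) ∧ ∀ a x, φ (δ a x) = δ (φ a) x

/-- `B` is a retract subautomaton. -/
def IsRetract {A X : Type*} (δ : A → X → A) (B : Set A) : Prop :=
  ∃ φ, IsRetractHom δ B φ

/-- An automaton is retractable if every subautomaton is retract. -/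
def Retractable {A X : Type*} (δ : A → X → A) : Prop :=
  ∀ B, IsSubaut δ B → IsRetract δ B

/-- Retractability of the subautomaton on the carrier `D` (homomorphisms are
represented by functions on the ambient state set, restricted to `D`). -/
def RetractableOn {A X : Type*} (δ : A → X → A) (D : Set A) : Prop :=
  ∀ C ⊆ D, IsSubaut δ C →
    ∃ φ : A → A, (∀ a ∈ D, φ a ∈ C) ∧ (∀ c ∈ C, φ c = c) ∧
      ∀ a ∈ D, ∀ x, φ (δ a x) = δ (φ a) x

/-- The principal subautomaton `R(a) = δ(a, X*)` generated by `a`. -/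
def Rset {A X : Type*} (δ : A → X → A) (a : A) : Set A :=
  {b | ∃ p : List X, deltaStar δ a p = b}

/-- The `R`-class `R_a = {b : R(b) = R(a)}`. -/
def Rclass {A X : Type*} (δ : A → X → A) (a : A) : Set A :=
  {b | Rset δ b = Rset δ a}

/-- `R[a] = R(a) − R_a`. -/
def Rideal {A X : Type*} (δ : A → X → A) (a : A) : Set A :=
  Rset δ a \ Rclass δ a

/-- The Rees congruence induced by `B`: two states are related iff they are
equal or both lie in `B`. -/
def reesRel {A : Type*} (B : Set A) (u v : A) : Prop :=
  u = v ∨ (u ∈ B ∧ v ∈ B)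

/-- A minimal subautomaton: a subautomaton with no proper subautomaton. -/
def IsMinimalSubaut {A X : Type*} (δ : A → X → A) (B : Set A) : Prop :=
  IsSubaut δ B ∧ ∀ C ⊆ B, IsSubaut δ C → C = B

/-- The automaton has a kernel: a subautomaton contained in every subautomaton. -/
def HasKernel {A X : Type*} (δ : A → X → A) : Prop :=
  ∃ K, IsSubaut δ K ∧ ∀ B, IsSubaut δ B → K ⊆ B

/-- The principal factor `R{a}` (the Rees factor of `R(a)` modulo `R[a]`,
described via the Rees congruence) is strongly connected. -/
def FactorSC {A X : Type*} (δ : A → X → A) (a : A) : Prop :=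
  ∀ b ∈ Rset δ a, ∀ c ∈ Rset δ a,
    ∃ p : List X, p ≠ [] ∧ reesRel (Rideal δ a) (deltaStar δ b p) c

/-- The principal factor `R{a}` is a strongly trap-connected non-trivial
one-trap automaton (with trap the class of `t`). -/
def FactorSTC {A X : Type*} (δ : A → X → A) (a : A) : Prop :=
  ∃ t ∈ Rset δ a,
    (∀ x, reesRel (Rideal δ a) (δ t x) t) ∧
    (∃ b ∈ Rset δ a, ¬ reesRel (Rideal δ a) b t) ∧
    (∀ b ∈ Rset δ a, (∀ x, reesRel (Rideal δ a) (δ b x) b) → reesRel (Rideal δ a) b t) ∧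
    (∀ b ∈ Rset δ a, ∀ c ∈ Rset δ a, ¬ reesRel (Rideal δ a) b t →
      ∃ p : List X, p ≠ [] ∧ reesRel (Rideal δ a) (deltaStar δ b p) c)

/-- The principal factor `R{a}` is a strongly trapped non-trivial one-trap
automaton (with trap the class of `t`). -/
def FactorST {A X : Type*} (δ : A → X → A) (a : A) : Prop :=
  ∃ t ∈ Rset δ a,
    (∃ b ∈ Rset δ a, ¬ reesRel (Rideal δ a) b t) ∧
    (∀ b ∈ Rset δ a, (∀ x, reesRel (Rideal δ a) (δ b x) b) → reesRel (Rideal δ a) b t) ∧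
    (∀ b ∈ Rset δ a, ∀ x, reesRel (Rideal δ a) (δ b x) t)

/-- Semiconnected: every principal factor is strongly connected or strongly
trap-connected. -/
def Semiconnected {A X : Type*} (δ : A → X → A) : Prop :=
  ∀ a, FactorSC δ a ∨ FactorSTC δ a

/-- The subautomaton on `D` is semiconnected, via the characterization: for
every subautomaton `C ⊆ D` and every `a ∈ C` there are `b ∈ C` and a nonempty
word `p` with `a = δ(b,p)`. -/
def SemiconnectedOn {A X : Type*} (δ : A → X → A) (D : Set A) : Prop :=
  ∀ C ⊆ D, IsSubaut δ C → ∀ a ∈ C, ∃ b ∈ C, ∃ p : List X, p ≠ [] ∧ deltaStar δ b p = a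

/-- The automaton is a dilation of its subautomaton `B`. -/
def IsDilationOf {A X : Type*} (δ : A → X → A) (B : Set A) : Prop :=
  IsSubaut δ B ∧ ∃ φ : A → A, (∀ a, φ a ∈ B) ∧ (∀ b ∈ B, φ b = b) ∧
    ∀ a x, δ a x = δ (φ a) x

/-- Extension of a partial transition function (`none` = the removed trap)
to words. -/
def pStar {C X : Type*} (d : C → X → Option C) : C → List X → Option C
  | a, [] => some a
  | a, x :: p => (d a x).bind fun b => pStar d b p

/-- The data of the Construction: a finite tree `(T, le)` with least element
`i0`; `C i` is the trap-removed part `A⁰ᵢ` of the automaton `Aᵢ`, with partial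
transition `d i` (`none` means the trap); `A_{i0}` is strongly connected and
the other `Aᵢ` are non-trivial strongly trap-connected one-trap automata;
`Φ i j` are the composite partial homomorphisms along covering chains
(given here as coherent data whose covering components satisfy conditions
(ii) and (iii)); `δ'` is the glued transition function on `A = ⋃ A⁰ᵢ`. -/
def ConstructionSpec {X : Type*} (T : Type*) (le : T → T → Prop) (i0 : T)
    (C : T → Type*) (d : ∀ i, C i → X → Option (C i))
    (Φ : ∀ i j, le j i → C i → C j)
    (δ' : (Σ i, C i) → X → Σ i, C i) : Prop :=
  (∀ i, le i i) ∧ (∀ i j, le i j → le j i → i = j) ∧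
  (∀ i j k, le i j → le j k → le i k) ∧
  Finite T ∧
  (∀ S : Set T, S.Nonempty → (∃ u, ∀ i ∈ S, le i u) → ∃ g ∈ S, ∀ i ∈ S, le i g) ∧
  (∀ i, le i0 i) ∧
  Nonempty (C i0) ∧
  (∀ (a : C i0) (x : X), (d i0 a x).isSome) ∧
  (∀ a b : C i0, ∃ p : List X, p ≠ [] ∧ pStar (d i0) a p = some b) ∧
  (∀ i, i ≠ i0 → Nonempty (C i) ∧
    (∀ a b : C i, ∃ p : List X, p ≠ [] ∧ pStar (d i) a p = some b) ∧
    (∀ a : C i, ∃ p : List X, p ≠ [] ∧ pStar (d i) a p = none)) ∧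
  (∀ i (h : le i i) (a : C i), Φ i i h a = a) ∧
  (∀ i j k (h1 : le j i) (h2 : le k j) (h3 : le k i) (a : C i),
    Φ j k h2 (Φ i j h1 a) = Φ i k h3 a) ∧
  (∀ i j (h : le j i), i ≠ j → (∀ k, le j k → le k i → k = j ∨ k = i) →
    (∀ (a : C i) (x : X) (b : C i),
      d i a x = some b → d j (Φ i j h a) x = some (Φ i j h b)) ∧
    ∃ (a : C i) (x : X), d i a x = none ∧ (d j (Φ i j h a) x).isSome) ∧
  (∀ i (a : C i) (x : X), ∃ (j : T) (hj : le j i) (b : C j),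
    δ' ⟨i, a⟩ x = ⟨j, b⟩ ∧ d j (Φ i j hj a) x = some b ∧
    ∀ k (hk : le k i), (d k (Φ i k hk a) x).isSome → le k j)

namespace Stmt18Aux

variable {A X : Type}

theorem deltaStar_append (δ : A → X → A) (a : A) (p q : List X) :
    deltaStar δ a (p ++ q) = deltaStar δ (deltaStar δ a p) q := by
  induction p generalizing a with
  | nil => rfl
  | cons x p ih => simp [deltaStar, ih]

theorem self_mem_rset (δ : A → X → A) (a : A) : a ∈ Rset δ a := ⟨[], rfl⟩

theorem rset_subaut (δ : A → X → A) (a : A) : IsSubaut δ (Rset δ a) := by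
  refine ⟨⟨a, self_mem_rset δ a⟩, ?_⟩
  rintro b ⟨p, rfl⟩ x
  exact ⟨p ++ [x], by simp [deltaStar_append, deltaStar]⟩

theorem deltaStar_mem {δ : A → X → A} {B : Set A} (hB : IsSubaut δ B) {a : A}
    (ha : a ∈ B) (p : List X) : deltaStar δ a p ∈ B := by
  induction p generalizing a with
  | nil => exact ha
  | cons x p ih => exact ih (hB.2 a ha x)

theorem rset_mono {δ : A → X → A} {a b : A} (h : b ∈ Rset δ a) : Rset δ b ⊆ Rset δ a := by
  obtain ⟨p, rfl⟩ := h
  rintro c ⟨q, rfl⟩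
  exact ⟨p ++ q, (deltaStar_append δ a p q)⟩

theorem hom_star {δ : A → X → A} {B : Set A} {φ : A → A} (h : IsRetractHom δ B φ)
    (a : A) (p : List X) : φ (deltaStar δ a p) = deltaStar δ (φ a) p := by
  induction p generalizing a with
  | nil => rfl
  | cons x p ih => simp only [deltaStar]; rw [ih, h.2.2]

/-- K4: a retraction onto `Rset c` maps anything above `c` into the class of `c`. -/
theorem retract_lands {δ : A → X → A} {c a : A} {φ : A → A}
    (h : IsRetractHom δ (Rset δ c) φ) (hc : c ∈ Rset δ a) : Rset δ (φ a) = Rset δ c := by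
  obtain ⟨p, hp⟩ := hc
  apply subset_antisymm (rset_mono (h.1 a))
  have : deltaStar δ (φ a) p = c := by
    rw [← hom_star h, hp, h.2.1 c (self_mem_rset δ c)]
  exact rset_mono ⟨p, this⟩

/-- K3: comparability of principal subautomata below a common state. -/
theorem rset_comparable {δ : A → X → A} (hret : Retractable δ) {a b c : A}
    (hb : b ∈ Rset δ a) (hc : c ∈ Rset δ a) :
    Rset δ b ⊆ Rset δ c ∨ Rset δ c ⊆ Rset δ b := by
  obtain ⟨ψ, hψ⟩ := hret (Rset δ b ∪ Rset δ c)
    ⟨⟨b, Or.inl (self_mem_rset δ b)⟩, by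
      rintro u (hu | hu) x
      · exact Or.inl ((rset_subaut δ b).2 u hu x)
      · exact Or.inr ((rset_subaut δ c).2 u hu x)⟩
  rcases hψ.1 a with hmem | hmem
  · right
    obtain ⟨q, hq⟩ := hc
    have : deltaStar δ (ψ a) q = c := by
      rw [← hom_star hψ, hq, hψ.2.1 c (Or.inr (self_mem_rset δ c))]
    exact (rset_mono ⟨q, this⟩).trans (rset_mono hmem)
  · left
    obtain ⟨q, hq⟩ := hb
    have : deltaStar δ (ψ a) q = b := by
      rw [← hom_star hψ, hq, hψ.2.1 b (Or.inl (self_mem_rset δ b))]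
    exact (rset_mono ⟨q, this⟩).trans (rset_mono hmem)

end Stmt18Aux
namespace Stmt18Aux

variable {A X : Type}

/-- K5a: within an R-class of a semiconnected automaton, every state is reachable
from every other by a nonempty word. -/
theorem class_reach [Nonempty X] {δ : A → X → A} (hsemi : Semiconnected δ) {a b : A}
    (h : Rset δ b = Rset δ a) : ∃ p : List X, p ≠ [] ∧ deltaStar δ a p = b := by
  have hbmem : b ∈ Rset δ a := h ▸ self_mem_rset δ b
  rcases hsemi a with hsc | hstc
  · obtain ⟨p, hp, hrel⟩ := hsc a (self_mem_rset δ a) b hbmem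
    rcases hrel with heq | ⟨_, hbid⟩
    · exact ⟨p, hp, heq⟩
    · exact absurd hbid (fun hb => hb.2 h)
  · obtain ⟨t, ht, htrap, _, _, hconn⟩ := hstc
    by_cases hc : Rset δ t = Rset δ a
    · -- the trap is in the class: the class is a singleton fixed point
      have htfix : ∀ x, δ t x = t := by
        intro x
        rcases htrap x with heq | ⟨_, hid⟩
        · exact heq
        · exact absurd hid (fun h' => h'.2 hc)
      have hstar : ∀ p, deltaStar δ t p = t := by
        intro p
        induction p with
        | nil => rfl
        | cons x q ih => simp [deltaStar, htfix, ih]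
      have hRt : Rset δ t = {t} := by
        apply subset_antisymm
        · rintro u ⟨p, rfl⟩; exact hstar p
        · rintro u rfl; exact self_mem_rset δ u
      have hat : a = t := by
        have : a ∈ Rset δ t := hc ▸ self_mem_rset δ a
        rw [hRt] at this; exact this
      have hbt : b = t := by
        have : b ∈ Rset δ t := hc ▸ hbmem
        rw [hRt] at this; exact this
      obtain ⟨x⟩ := ‹Nonempty X›
      exact ⟨[x], by simp, by simp [deltaStar, hat, hbt, htfix]⟩
    · have hnot : ¬ reesRel (Rideal δ a) a t := by
        rintro (rfl | ⟨hid, _⟩)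
        · exact hc rfl
        · exact hid.2 rfl
      obtain ⟨p, hp, hrel⟩ := hconn a (self_mem_rset δ a) b hbmem hnot
      rcases hrel with heq | ⟨_, hbid⟩
      · exact ⟨p, hp, heq⟩
      · exact absurd hbid (fun hb' => hb'.2 h)

/-- The setoid of R-equivalence. -/
def rS (δ : A → X → A) : Setoid A :=
  ⟨fun a b => Rset δ a = Rset δ b, ⟨fun _ => rfl, Eq.symm, Eq.trans⟩⟩

abbrev Tq (δ : A → X → A) := Quotient (rS δ)

def cls (δ : A → X → A) (a : A) : Tq δ := Quotient.mk (rS δ) a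

noncomputable def rep (δ : A → X → A) (i : Tq δ) : A := Quotient.out i

def tle (δ : A → X → A) (i j : Tq δ) : Prop :=
  Rset δ (rep δ i) ⊆ Rset δ (rep δ j)

theorem cls_rep (δ : A → X → A) (i : Tq δ) : cls δ (rep δ i) = i := Quotient.out_eq i

theorem rset_eq_of_cls_eq {δ : A → X → A} {a b : A} (h : cls δ a = cls δ b) :
    Rset δ a = Rset δ b := Quotient.exact h

theorem cls_eq_of_rset_eq {δ : A → X → A} {a b : A} (h : Rset δ a = Rset δ b) :
    cls δ a = cls δ b := Quotient.sound h

theorem rset_rep_cls (δ : A → X → A) (a : A) : Rset δ (rep δ (cls δ a)) = Rset δ a :=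
  rset_eq_of_cls_eq (cls_rep δ (cls δ a))

theorem tle_cls_iff {δ : A → X → A} (a b : A) :
    tle δ (cls δ a) (cls δ b) ↔ Rset δ a ⊆ Rset δ b := by
  unfold tle; rw [rset_rep_cls, rset_rep_cls]

theorem tle_refl (δ : A → X → A) (i : Tq δ) : tle δ i i := subset_rfl

theorem tle_trans {δ : A → X → A} {i j k : Tq δ} (h1 : tle δ i j) (h2 : tle δ j k) :
    tle δ i k := h1.trans h2

theorem tle_antisymm {δ : A → X → A} {i j : Tq δ} (h1 : tle δ i j) (h2 : tle δ j i) :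
    i = j := by
  rw [← cls_rep δ i, ← cls_rep δ j]
  exact cls_eq_of_rset_eq (subset_antisymm h1 h2)

/-- Any nonempty bounded-above set of classes has a greatest element. -/
theorem exists_greatest [Finite A] {δ : A → X → A} (hret : Retractable δ)
    (S : Set (Tq δ)) (hS : S.Nonempty) (u : Tq δ) (hu : ∀ i ∈ S, tle δ i u) :
    ∃ g ∈ S, ∀ i ∈ S, tle δ i g := by
  have hfin : S.Finite := Set.toFinite S
  obtain ⟨g, hgS, hmax⟩ := hfin.exists_maximalFor (fun i => Rset δ (rep δ i)) S hS
  refine ⟨g, hgS, fun i hi => ?_⟩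
  have h1 : rep δ i ∈ Rset δ (rep δ u) := hu i hi (self_mem_rset δ (rep δ i))
  have h2 : rep δ g ∈ Rset δ (rep δ u) := hu g hgS (self_mem_rset δ (rep δ g))
  rcases rset_comparable hret h1 h2 with hc | hc
  · exact hc
  · exact hmax hi hc

def lcP (δ : A → X → A) (i : Tq δ) : Prop :=
  ∃ g, tle δ g i ∧ g ≠ i ∧ ∀ k, tle δ k i → k ≠ i → tle δ k g

open Classical in
noncomputable def lc (δ : A → X → A) (i : Tq δ) : Tq δ :=
  if h : lcP δ i then h.choose else i

theorem lc_spec {δ : A → X → A} {i : Tq δ} (h : lcP δ i) :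
    tle δ (lc δ i) i ∧ lc δ i ≠ i ∧ ∀ k, tle δ k i → k ≠ i → tle δ k (lc δ i) := by
  rw [lc, dif_pos h]; exact h.choose_spec

theorem lcP_of [Finite A] {δ : A → X → A} (hret : Retractable δ) {i j : Tq δ}
    (hj : tle δ j i) (hne : j ≠ i) : lcP δ i := by
  obtain ⟨g, hgS, hmax⟩ := exists_greatest hret {k | tle δ k i ∧ k ≠ i} ⟨j, hj, hne⟩ i
    (fun k hk => hk.1)
  exact ⟨g, hgS.1, hgS.2, fun k h1 h2 => hmax k ⟨h1, h2⟩⟩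

noncomputable def retr (δ : A → X → A) (hret : Retractable δ) (c : A) : A → A :=
  (hret _ (rset_subaut δ c)).choose

theorem retr_spec (δ : A → X → A) (hret : Retractable δ) (c : A) :
    IsRetractHom δ (Rset δ c) (retr δ hret c) :=
  (hret _ (rset_subaut δ c)).choose_spec

open Classical in
noncomputable def pih (δ : A → X → A) (hret : Retractable δ) (a : A) : A :=
  if lcP δ (cls δ a) then retr δ hret (rep δ (lc δ (cls δ a))) a else a

end Stmt18Aux
namespace Stmt18Aux

variable {A X : Type}

theorem ncard_rset_pos [Finite A] (δ : A → X → A) (a : A) : 0 < (Rset δ a).ncard :=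
  (Set.ncard_pos (Set.toFinite _)).mpr ⟨a, self_mem_rset δ a⟩

theorem ncard_rset_le [Finite A] (δ : A → X → A) (a : A) : (Rset δ a).ncard ≤ Nat.card A := by
  rw [← Set.ncard_univ]
  exact Set.ncard_le_ncard (Set.subset_univ _) Set.finite_univ

theorem pih_props [Finite A] {δ : A → X → A} (hret : Retractable δ) {a : A} {j : Tq δ}
    (hj : tle δ j (cls δ a)) (hne : j ≠ cls δ a) :
    cls δ (pih δ hret a) = lc δ (cls δ a) ∧ tle δ j (lc δ (cls δ a)) ∧
      (Rset δ (pih δ hret a)).ncard < (Rset δ a).ncard := by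
  have hP : lcP δ (cls δ a) := lcP_of hret hj hne
  obtain ⟨hg1, hg2, hg3⟩ := lc_spec hP
  set g := lc δ (cls δ a) with hgdef
  have hpe : pih δ hret a = retr δ hret (rep δ g) a := by
    rw [pih, if_pos hP]
  have hrg : rep δ g ∈ Rset δ a := by
    have := hg1 (self_mem_rset δ (rep δ g))
    rwa [rset_rep_cls] at this
  have hlands : Rset δ (pih δ hret a) = Rset δ (rep δ g) := by
    rw [hpe]; exact retract_lands (retr_spec δ hret (rep δ g)) hrg
  have hclsp : cls δ (pih δ hret a) = g := by
    rw [← cls_rep δ g]; exact cls_eq_of_rset_eq hlands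
  refine ⟨hclsp, hg3 j hj hne, ?_⟩
  have hsub : Rset δ (pih δ hret a) ⊆ Rset δ a := by
    rw [hlands]; exact rset_mono hrg
  have hnee : Rset δ (pih δ hret a) ≠ Rset δ a := by
    intro h
    exact hg2 (by rw [← hclsp]; exact cls_eq_of_rset_eq h)
  exact Set.ncard_lt_ncard (ssubset_of_subset_of_ne hsub hnee) (Set.toFinite _)

theorem pih_fix [Finite A] {δ : A → X → A} (hret : Retractable δ) {a y : A} {j : Tq δ}
    (hj : tle δ j (cls δ a)) (hne : j ≠ cls δ a) (hy : y ∈ Rset δ (rep δ j))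
    (p : List X) (hp : deltaStar δ a p = y) : deltaStar δ (pih δ hret a) p = y := by
  have hP : lcP δ (cls δ a) := lcP_of hret hj hne
  obtain ⟨hg1, hg2, hg3⟩ := lc_spec hP
  set g := lc δ (cls δ a) with hgdef
  have hpe : pih δ hret a = retr δ hret (rep δ g) a := by rw [pih, if_pos hP]
  have hyg : y ∈ Rset δ (rep δ g) := hg3 j hj hne hy
  rw [hpe, ← hom_star (retr_spec δ hret (rep δ g)), hp,
    (retr_spec δ hret (rep δ g)).2.1 y hyg]

open Classical in
noncomputable def chainDown {ι : Type} (π : A → A) (f : A → ι) (j : ι) : ℕ → A → A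
  | 0, a => a
  | n+1, a => if f a = j then a else chainDown π f j n (π a)

theorem chainDown_stop {ι : Type} (π : A → A) (f : A → ι) (j : ι) (n : ℕ) (a : A)
    (h : f a = j) : chainDown π f j n a = a := by
  cases n with
  | zero => rfl
  | succ n => rw [chainDown, if_pos h]

theorem chainDown_step {ι : Type} (π : A → A) (f : A → ι) (j : ι) (n : ℕ) (a : A)
    (h : f a ≠ j) : chainDown π f j (n+1) a = chainDown π f j n (π a) := by
  rw [chainDown, if_neg h]

end Stmt18Aux
namespace Stmt18Aux

variable {A X : Type}

theorem cd1 [Finite A] {δ : A → X → A} (hret : Retractable δ) {j : Tq δ} :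
    ∀ (n : ℕ) (a : A), (Rset δ a).ncard ≤ n → tle δ j (cls δ a) →
      cls δ (chainDown (pih δ hret) (cls δ) j n a) = j := by
  intro n
  induction n with
  | zero => intro a hb _; exact absurd (lt_of_lt_of_le (ncard_rset_pos δ a) hb) (lt_irrefl 0)
  | succ n ih =>
    intro a hb htle
    by_cases h : cls δ a = j
    · rw [chainDown_stop _ _ _ _ _ h]; exact h
    · have hne : j ≠ cls δ a := fun e => h e.symm
      obtain ⟨hc1, hc2, hc3⟩ := pih_props hret htle hne
      rw [chainDown_step _ _ _ _ _ h]
      exact ih _ (by omega) (by rw [hc1]; exact hc2)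

theorem cd2 [Finite A] {δ : A → X → A} (hret : Retractable δ) {j : Tq δ} :
    ∀ (n m : ℕ) (a : A), (Rset δ a).ncard ≤ n → (Rset δ a).ncard ≤ m →
      tle δ j (cls δ a) →
      chainDown (pih δ hret) (cls δ) j n a = chainDown (pih δ hret) (cls δ) j m a := by
  intro n
  induction n with
  | zero => intro m a hb _ _; exact absurd (lt_of_lt_of_le (ncard_rset_pos δ a) hb) (lt_irrefl 0)
  | succ n ih =>
    intro m a hb hbm htle
    match m, hbm with
    | 0, hbm => exact absurd (lt_of_lt_of_le (ncard_rset_pos δ a) hbm) (lt_irrefl 0)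
    | m+1, hbm =>
      by_cases h : cls δ a = j
      · rw [chainDown_stop _ _ _ _ _ h, chainDown_stop _ _ _ _ _ h]
      · have hne : j ≠ cls δ a := fun e => h e.symm
        obtain ⟨hc1, hc2, hc3⟩ := pih_props hret htle hne
        rw [chainDown_step _ _ _ _ _ h, chainDown_step _ _ _ _ _ h]
        exact ih _ _ (by omega) (by omega) (by rw [hc1]; exact hc2)

theorem cd3 [Finite A] {δ : A → X → A} (hret : Retractable δ) {j : Tq δ} {y : A}
    (hy : y ∈ Rset δ (rep δ j)) (p : List X) :
    ∀ (n : ℕ) (a : A), (Rset δ a).ncard ≤ n → tle δ j (cls δ a) →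
      deltaStar δ a p = y →
      deltaStar δ (chainDown (pih δ hret) (cls δ) j n a) p = y := by
  intro n
  induction n with
  | zero => intro a hb _ _; exact absurd (lt_of_lt_of_le (ncard_rset_pos δ a) hb) (lt_irrefl 0)
  | succ n ih =>
    intro a hb htle hp
    by_cases h : cls δ a = j
    · rw [chainDown_stop _ _ _ _ _ h]; exact hp
    · have hne : j ≠ cls δ a := fun e => h e.symm
      obtain ⟨hc1, hc2, hc3⟩ := pih_props hret htle hne
      rw [chainDown_step _ _ _ _ _ h]
      exact ih _ (by omega) (by rw [hc1]; exact hc2) (pih_fix hret htle hne hy p hp)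

theorem cd4 [Finite A] [Nonempty A] {δ : A → X → A} (hret : Retractable δ) {j k : Tq δ}
    (hk : tle δ k j) :
    ∀ (n : ℕ) (a : A), (Rset δ a).ncard ≤ n → tle δ j (cls δ a) →
      chainDown (pih δ hret) (cls δ) k (Nat.card A)
          (chainDown (pih δ hret) (cls δ) j (Nat.card A) a) =
        chainDown (pih δ hret) (cls δ) k (Nat.card A) a := by
  obtain ⟨m, hm⟩ : ∃ m, Nat.card A = m + 1 :=
    ⟨Nat.card A - 1, (Nat.succ_pred_eq_of_pos Nat.card_pos).symm⟩
  intro n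
  induction n with
  | zero => intro a hb _; exact absurd (lt_of_lt_of_le (ncard_rset_pos δ a) hb) (lt_irrefl 0)
  | succ n ih =>
    intro a hb htle
    by_cases h : cls δ a = j
    · rw [chainDown_stop _ _ _ _ _ h]
    · have hne : j ≠ cls δ a := fun e => h e.symm
      obtain ⟨hc1, hc2, hc3⟩ := pih_props hret htle hne
      have htle' : tle δ j (cls δ (pih δ hret a)) := by rw [hc1]; exact hc2
      have hA := ncard_rset_le δ a
      have hbnd : (Rset δ (pih δ hret a)).ncard ≤ m := by omega
      have hbndN : (Rset δ (pih δ hret a)).ncard ≤ Nat.card A :=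
        ncard_rset_le δ _
      have hka : cls δ a ≠ k := by
        intro e
        exact hne (tle_antisymm htle (by rw [e]; exact hk))
      have e1 : chainDown (pih δ hret) (cls δ) j (Nat.card A) a =
          chainDown (pih δ hret) (cls δ) j (Nat.card A) (pih δ hret a) := by
        rw [hm, chainDown_step _ _ _ _ _ h]
        exact cd2 hret m (m+1) _ hbnd (by omega) htle'
      have e2 : chainDown (pih δ hret) (cls δ) k (Nat.card A) a =
          chainDown (pih δ hret) (cls δ) k (Nat.card A) (pih δ hret a) := by
        rw [hm, chainDown_step _ _ _ _ _ hka]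
        exact cd2 hret m (m+1) _ hbnd (by omega) (tle_trans hk htle')
      rw [e1, e2, ih _ (by
        have hle : (Rset δ a).ncard ≤ n + 1 := hb
        omega) htle']

theorem cd6 [Finite A] {δ : A → X → A} (hret : Retractable δ) {j : Tq δ} {a : A}
    (htle : tle δ j (cls δ a)) (hne : cls δ a ≠ j) (hlc : lc δ (cls δ a) = j) :
    chainDown (pih δ hret) (cls δ) j (Nat.card A) a = pih δ hret a := by
  have hne' : j ≠ cls δ a := fun e => hne e.symm
  obtain ⟨hc1, hc2, hc3⟩ := pih_props hret htle hne'
  have hnontriv : 2 ≤ Nat.card A := by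
    have h1 : rep δ j ≠ rep δ (cls δ a) := by
      intro e
      apply hne'
      rw [← cls_rep δ j, ← cls_rep δ (cls δ a), e]
    have : Nontrivial A := ⟨⟨rep δ j, rep δ (cls δ a), h1⟩⟩
    exact Finite.one_lt_card_iff_nontrivial.mpr this
  obtain ⟨m, hm⟩ : ∃ m, Nat.card A = m + 2 := ⟨Nat.card A - 2, by omega⟩
  rw [hm, chainDown_step _ _ _ _ _ hne, chainDown_stop _ _ _ _ _ (by rw [hc1, hlc])]

end Stmt18Aux
namespace Stmt18Aux

variable {A X : Type}

def Cc (δ : A → X → A) (i : Tq δ) : Type := {a : A // cls δ a = i}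

open Classical in
noncomputable def dd (δ : A → X → A) (i : Tq δ) (a : Cc δ i) (x : X) : Option (Cc δ i) :=
  if h : cls δ (δ a.1 x) = i then some ⟨δ a.1 x, h⟩ else none

def dl (δ : A → X → A) : (Σ i, Cc δ i) → X → Σ i, Cc δ i :=
  fun s x => ⟨cls δ (δ s.2.1 x), δ s.2.1 x, rfl⟩

noncomputable def Phi [Finite A] (δ : A → X → A) (hret : Retractable δ)
    (i j : Tq δ) (h : tle δ j i) (a : Cc δ i) : Cc δ j :=
  ⟨chainDown (pih δ hret) (cls δ) j (Nat.card A) a.1,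
    cd1 hret _ _ (ncard_rset_le δ a.1) (by rw [a.2]; exact h)⟩

theorem dd_eq_some {δ : A → X → A} {i : Tq δ} {a : Cc δ i} {x : X}
    (h : cls δ (δ a.1 x) = i) : dd δ i a x = some ⟨δ a.1 x, h⟩ := dif_pos h

theorem dd_eq_none {δ : A → X → A} {i : Tq δ} {a : Cc δ i} {x : X}
    (h : cls δ (δ a.1 x) ≠ i) : dd δ i a x = none := dif_neg h

theorem dd_isSome_iff {δ : A → X → A} {i : Tq δ} {a : Cc δ i} {x : X} :
    (dd δ i a x).isSome ↔ cls δ (δ a.1 x) = i := by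
  by_cases h : cls δ (δ a.1 x) = i
  · rw [dd_eq_some h]; exact iff_of_true rfl h
  · simp [dd_eq_none h, h]

theorem dd_inv {δ : A → X → A} {i : Tq δ} {a b : Cc δ i} {x : X}
    (hd : dd δ i a x = some b) : cls δ (δ a.1 x) = i ∧ δ a.1 x = b.1 := by
  by_cases h : cls δ (δ a.1 x) = i
  · rw [dd_eq_some h] at hd
    refine ⟨h, ?_⟩
    have := Option.some_injective _ hd
    rw [← this]
  · rw [dd_eq_none h] at hd; exact absurd hd (by simp)

/-- K2: a path between states of the same class stays within the class. -/
theorem pStar_of_deltaStar (δ : A → X → A) {i : Tq δ} :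
    ∀ (p : List X) (a b : A) (ha : cls δ a = i) (hb : cls δ b = i),
      deltaStar δ a p = b → pStar (dd δ i) ⟨a, ha⟩ p = some ⟨b, hb⟩ := by
  intro p
  induction p with
  | nil =>
    intro a b ha hb hp
    exact congrArg some (Subtype.ext hp)
  | cons x p ih =>
    intro a b ha hb hp
    have hax : Rset δ (δ a x) = Rset δ a := by
      apply subset_antisymm (rset_mono ⟨[x], rfl⟩)
      calc Rset δ a = Rset δ b := rset_eq_of_cls_eq (ha.trans hb.symm)
        _ ⊆ Rset δ (δ a x) := rset_mono ⟨p, hp⟩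
    have hcax : cls δ (δ a x) = i := (cls_eq_of_rset_eq hax).trans ha
    show (dd δ i ⟨a, ha⟩ x).bind _ = _
    rw [show dd δ i ⟨a, ha⟩ x = some ⟨δ a x, hcax⟩ from dd_eq_some hcax]
    exact ih (δ a x) b hcax hb hp

theorem pStar_snoc {C : Type} (d : C → X → Option C) (p : List X) :
    ∀ (a : C) (x : X), pStar d a (p ++ [x]) = (pStar d a p).bind (fun b => d b x) := by
  induction p with
  | nil =>
    intro a x
    show (d a x).bind _ = (some a).bind (fun b => d b x)
    rw [Option.bind_some]
    cases h : d a x <;> rfl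
  | cons y p ih =>
    intro a x
    show (d a y).bind _ = ((d a y).bind _).bind _
    cases d a y with
    | none => rfl
    | some b => simp only [Option.bind_some]; exact ih b x

/-- K5a at the glued level: strong connectivity within each class. -/
theorem class_conn [Nonempty X] {δ : A → X → A} (hsemi : Semiconnected δ) (i : Tq δ)
    (a b : Cc δ i) : ∃ p : List X, p ≠ [] ∧ pStar (dd δ i) a p = some b := by
  obtain ⟨p, hp, hpath⟩ := class_reach hsemi (rset_eq_of_cls_eq (b.2.trans a.2.symm))
  exact ⟨p, hp, by
    have := pStar_of_deltaStar δ p a.1 b.1 a.2 b.2 hpath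
    exact this⟩

/-- K9: the first exit from a class along a path. -/
theorem first_exit (δ : A → X → A) :
    ∀ (p : List X) (a y : A), deltaStar δ a p = y → Rset δ y ≠ Rset δ a →
      ∃ u x q, Rset δ u = Rset δ a ∧ Rset δ (δ u x) ≠ Rset δ a ∧
        deltaStar δ (δ u x) q = y := by
  intro p
  induction p with
  | nil =>
    intro a y hp hne
    exact absurd (show Rset δ y = Rset δ a by rw [← hp]; rfl) hne
  | cons x p ih =>
    intro a y hp hne
    by_cases h : Rset δ (δ a x) = Rset δ a
    · obtain ⟨u, x', q, h1, h2, h3⟩ := ih (δ a x) y hp (by rw [h]; exact hne)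
      exact ⟨u, x', q, h1.trans h, fun e => h2 (e.trans h.symm), h3⟩
    · exact ⟨a, x, p, rfl, h, hp⟩

end Stmt18Aux

open Stmt18Aux

/-- every finite semiconnected retractable automaton containing a
kernel is isomorphic to an automaton of the Construction, with `T` the tree of
principal factors ordered by inclusion of principal subautomata. -/
theorem stmt_18 {A X : Type} [Finite A] [Nonempty A] [Nonempty X]
    (δ : A → X → A) (hret : Retractable δ) (hsemi : Semiconnected δ)
    (hker : HasKernel δ) :
    ∃ (T : Type) (le : T → T → Prop) (i0 : T) (C : T → Type)
      (d : ∀ i, C i → X → Option (C i)) (Φ : ∀ i j, le j i → C i → C j)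
      (δ' : (Σ i, C i) → X → Σ i, C i),
      ConstructionSpec T le i0 C d Φ δ' ∧
      (∃ e : A ≃ Σ i, C i, ∀ a x, e (δ a x) = δ' (e a) x) ∧
      ∃ f : T → A, (∀ i j, le i j ↔ Rset δ (f i) ⊆ Rset δ (f j)) ∧
        ∀ a : A, ∃! i : T, Rset δ (f i) = Rset δ a := by
  classical
  obtain ⟨K, hKsub, hKmin⟩ := hker
  obtain ⟨k0, hk0⟩ := hKsub.1
  have hRk0 : Rset δ k0 = K :=
    subset_antisymm (by rintro b ⟨p, rfl⟩; exact deltaStar_mem hKsub hk0 p)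
      (hKmin _ (rset_subaut δ k0))
  refine ⟨Tq δ, tle δ, cls δ k0, Cc δ, dd δ, Phi δ hret, dl δ, ?_, ?_, ?_⟩
  · -- ConstructionSpec
    refine ⟨tle_refl δ, fun i j h1 h2 => tle_antisymm h1 h2,
      fun i j k h1 h2 => tle_trans h1 h2, Quotient.finite _,
      fun S hS hb => hb.elim (fun u hu => exists_greatest hret S hS u hu),
      ?_, ⟨⟨k0, rfl⟩⟩, ?_, fun a b => class_conn hsemi _ a b, ?_, ?_, ?_, ?_, ?_⟩
    · -- le i0 i
      intro i
      show Rset δ (rep δ (cls δ k0)) ⊆ Rset δ (rep δ i)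
      rw [rset_rep_cls, hRk0]
      exact hKmin _ (rset_subaut δ (rep δ i))
    · -- d i0 total
      intro a x
      rw [dd_isSome_iff]
      have h1 : Rset δ (δ a.1 x) = Rset δ k0 := by
        apply subset_antisymm
        · calc Rset δ (δ a.1 x) ⊆ Rset δ a.1 := rset_mono ⟨[x], rfl⟩
            _ = Rset δ k0 := rset_eq_of_cls_eq a.2
        · rw [hRk0]; exact hKmin _ (rset_subaut δ (δ a.1 x))
      exact cls_eq_of_rset_eq h1
    · -- non-kernel classes
      intro i hne
      refine ⟨⟨⟨rep δ i, cls_rep δ i⟩⟩, fun a b => class_conn hsemi _ a b, ?_⟩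
      intro a
      have hex : ∃ b x, cls δ b = i ∧ cls δ (δ b x) ≠ i := by
        by_contra hcl
        push_neg at hcl
        have hsub : IsSubaut δ {b | cls δ b = i} :=
          ⟨⟨a.1, a.2⟩, fun b hb x => hcl b x hb⟩
        have hk0i : cls δ k0 = i := hKmin _ hsub hk0
        exact hne hk0i.symm
      obtain ⟨b, x, hb, hbx⟩ := hex
      obtain ⟨p, hp, hpath⟩ := class_reach hsemi (rset_eq_of_cls_eq (hb.trans a.2.symm))
      refine ⟨p ++ [x], by simp, ?_⟩
      rw [pStar_snoc]
      have h2 : pStar (dd δ i) a p = some ⟨b, hb⟩ := by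
        have h3 := pStar_of_deltaStar δ p a.1 b a.2 hb hpath
        exact h3
      rw [h2]; exact dd_eq_none hbx
    · -- Φ i i = id
      intro i h a
      exact Subtype.ext (chainDown_stop _ _ _ _ _ a.2)
    · -- coherence
      intro i j k h1 h2 h3 a
      exact Subtype.ext (cd4 hret h2 _ a.1 (le_refl _) (by rw [a.2]; exact h1))
    · -- covering conditions
      intro i j h hne hcov
      have hji : j ≠ i := fun e => hne e.symm
      have hP : lcP δ i := lcP_of hret h hji
      obtain ⟨hl1, hl2, hl3⟩ := lc_spec hP
      have hlc : lc δ i = j := by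
        rcases hcov (lc δ i) (hl3 j h hji) hl1 with e | e
        · exact e
        · exact absurd e hl2
      set φ := retr δ hret (rep δ j) with hφdef
      have hφ := retr_spec δ hret (rep δ j)
      have hPhi : ∀ a : Cc δ i, (Phi δ hret i j h a).1 = φ a.1 := by
        intro a
        have h1 : (Phi δ hret i j h a).1 = pih δ hret a.1 :=
          cd6 hret (by rw [a.2]; exact h) (by rw [a.2]; exact hne)
            (by rw [a.2]; exact hlc)
        rw [h1]
        simp only [pih]
        rw [a.2, if_pos hP, hlc]
      have hmem : ∀ (u : A), cls δ u = i → rep δ j ∈ Rset δ u := by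
        intro u hu
        have hs : Rset δ (rep δ j) ⊆ Rset δ u := by
          calc Rset δ (rep δ j) ⊆ Rset δ (rep δ i) := h
            _ = Rset δ u := by rw [← hu, rset_rep_cls]
        exact hs (self_mem_rset δ (rep δ j))
      constructor
      · intro a x b hd
        obtain ⟨hdc, hdv⟩ := dd_inv hd
        have hφb : cls δ (φ b.1) = j := by
          rw [← cls_rep δ j]
          exact cls_eq_of_rset_eq (retract_lands hφ (hmem b.1 b.2))
        have hstep : δ ((Phi δ hret i j h a).1) x = φ b.1 := by
          rw [hPhi a, ← hφ.2.2, hdv]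
        have hc : cls δ (δ ((Phi δ hret i j h a).1) x) = j := by rw [hstep]; exact hφb
        rw [dd_eq_some hc]
        refine congrArg some (Subtype.ext ?_)
        show δ ((Phi δ hret i j h a).1) x = (Phi δ hret i j h b).1
        rw [hstep, hPhi b]
      · have hrepj : rep δ j ∈ Rset δ (rep δ i) := h (self_mem_rset δ (rep δ j))
        obtain ⟨p, hp⟩ := hrepj
        have hRne : Rset δ (rep δ j) ≠ Rset δ (rep δ i) := by
          intro e
          exact hji (by rw [← cls_rep δ j, ← cls_rep δ i]; exact cls_eq_of_rset_eq e)
        obtain ⟨u, x, q, h1, h2, h3⟩ := first_exit δ p (rep δ i) (rep δ j) hp hRne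
        have hu : cls δ u = i := by rw [← cls_rep δ i]; exact cls_eq_of_rset_eq h1
        refine ⟨⟨u, hu⟩, x, ?_, ?_⟩
        · apply dd_eq_none
          intro e
          have he := rset_rep_cls δ (δ u x)
          rw [e] at he
          exact h2 he.symm
        · rw [dd_isSome_iff]
          have hstep : δ ((Phi δ hret i j h ⟨u, hu⟩).1) x = φ (δ u x) := by
            rw [hPhi ⟨u, hu⟩, ← hφ.2.2]
          rw [hstep, ← cls_rep δ j]
          exact cls_eq_of_rset_eq (retract_lands hφ ⟨q, h3⟩)
    · -- glued transition condition
      intro i a x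
      have hRi : Rset δ (rep δ i) = Rset δ a.1 := by
        have h0 := rset_rep_cls δ a.1
        rw [a.2] at h0
        exact h0
      have hj : tle δ (cls δ (δ a.1 x)) i := by
        show Rset δ (rep δ (cls δ (δ a.1 x))) ⊆ Rset δ (rep δ i)
        rw [rset_rep_cls, hRi]
        exact rset_mono ⟨[x], rfl⟩
      refine ⟨cls δ (δ a.1 x), hj, ⟨δ a.1 x, rfl⟩, rfl, ?_, ?_⟩
      · have hy : δ a.1 x ∈ Rset δ (rep δ (cls δ (δ a.1 x))) := by
          rw [rset_rep_cls]; exact self_mem_rset δ _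
        have hstep : deltaStar δ ((Phi δ hret i (cls δ (δ a.1 x)) hj a).1) [x]
            = δ a.1 x :=
          cd3 hret hy [x] (Nat.card A) a.1 (ncard_rset_le δ a.1)
            (by rw [a.2]; exact hj) rfl
        have hc : cls δ (δ ((Phi δ hret i (cls δ (δ a.1 x)) hj a).1) x)
            = cls δ (δ a.1 x) := by
          rw [show δ ((Phi δ hret i (cls δ (δ a.1 x)) hj a).1) x = δ a.1 x from hstep]
        rw [dd_eq_some hc]
        exact congrArg some (Subtype.ext hstep)
      · intro k hk hsome
        rw [dd_isSome_iff] at hsome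
        have h1 : rep δ k ∈ Rset δ a.1 := by
          have hs : Rset δ (rep δ k) ⊆ Rset δ a.1 := by
            calc Rset δ (rep δ k) ⊆ Rset δ (rep δ i) := hk
              _ = Rset δ a.1 := hRi
          exact hs (self_mem_rset δ (rep δ k))
        have h2 : δ a.1 x ∈ Rset δ a.1 := ⟨[x], rfl⟩
        rcases rset_comparable hret h1 h2 with hc | hc
        · show Rset δ (rep δ k) ⊆ Rset δ (rep δ (cls δ (δ a.1 x)))
          rw [rset_rep_cls]; exact hc
        · have hy : δ a.1 x ∈ Rset δ (rep δ k) := hc (self_mem_rset δ _)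
          have hstep : deltaStar δ ((Phi δ hret i k hk a).1) [x] = δ a.1 x :=
            cd3 hret hy [x] (Nat.card A) a.1 (ncard_rset_le δ a.1)
              (by rw [a.2]; exact hk) rfl
          have hjk : cls δ (δ a.1 x) = k := by
            rw [← hsome, show δ ((Phi δ hret i k hk a).1) x = δ a.1 x from hstep]
          rw [hjk]
          exact tle_refl δ k
  · -- isomorphism
    refine ⟨⟨fun a => ⟨cls δ a, a, rfl⟩, fun s => s.2.1, fun a => rfl, ?_⟩,
      fun a x => rfl⟩
    rintro ⟨i, a, ha⟩
    subst ha
    rfl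
  · -- the tree of principal factors
    refine ⟨rep δ, fun i j => Iff.rfl, fun a => ⟨cls δ a, rset_rep_cls δ a, ?_⟩⟩
    intro i hi
    rw [← cls_rep δ i]
    exact cls_eq_of_rset_eq hi
end

section
/- If A is a retractable automaton and λ_{i,j} is the restriction to R(a_i) of a retract homomorphism of A onto R(a_j) with R(a_j) ⊆ R(a_i), then λ_{i,j} maps the R-class R_{a_i} into the R-class R_{a_j}, and hence induces a partial homomorphism of the trap-removed principal factor R^0{a_i} into R^0{a_j}. -/
universe u v

lemma deltaStar_append {A X : Type*} (δ : A → X → A) (a : A) (p q : List X) :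
    deltaStar δ a (p ++ q) = deltaStar δ (deltaStar δ a p) q := by
  induction p generalizing a with
  | nil => rfl
  | cons x p ih => simp [deltaStar, ih]

lemma Rset_subset {A X : Type*} (δ : A → X → A) {a b : A} (h : b ∈ Rset δ a) :
    Rset δ b ⊆ Rset δ a := by
  obtain ⟨p, hp⟩ := h
  rintro c ⟨q, hq⟩
  exact ⟨p ++ q, by rw [deltaStar_append, hp, hq]⟩

lemma hom_deltaStar {A X : Type*} {δ : A → X → A} {B : Set A} {φ : A → A}
    (hφ : IsRetractHom δ B φ) (a : A) (p : List X) :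
    φ (deltaStar δ a p) = deltaStar δ (φ a) p := by
  induction p generalizing a with
  | nil => rfl
  | cons x p ih => simp [deltaStar, ih, hφ.2.2]

/-- the restriction of a retract homomorphism onto `R(a_j)`
(with `R(a_j) ⊆ R(a_i)`) maps `R_{a_i}` into `R_{a_j}` and induces a partial
homomorphism of the trap-removed principal factors. -/
theorem stmt_19 {A X : Type*} (δ : A → X → A) (h : Retractable δ)
    (ai aj : A) (hsub : Rset δ aj ⊆ Rset δ ai)
    (φ : A → A) (hφ : IsRetractHom δ (Rset δ aj) φ) :
    (∀ b ∈ Rclass δ ai, φ b ∈ Rclass δ aj) ∧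
    (∀ b ∈ Rclass δ ai, ∀ x : X, δ b x ∈ Rclass δ ai →
      δ (φ b) x ∈ Rclass δ aj ∧ δ (φ b) x = φ (δ b x)) := by
  have key : ∀ b ∈ Rclass δ ai, φ b ∈ Rclass δ aj := by
    intro b hb
    have hbR : Rset δ b = Rset δ ai := hb
    have hφb : φ b ∈ Rset δ aj := hφ.1 b
    apply Set.Subset.antisymm (Rset_subset δ hφb)
    -- aj ∈ Rset δ b
    have haj : aj ∈ Rset δ b := by
      rw [hbR]; exact hsub ⟨[], rfl⟩
    obtain ⟨p, hp⟩ := haj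
    have : φ aj = aj := hφ.2.1 aj ⟨[], rfl⟩
    have haj' : aj ∈ Rset δ (φ b) := ⟨p, by rw [← hom_deltaStar hφ, hp, this]⟩
    exact Rset_subset δ haj'
  refine ⟨key, fun b hb x hx => ?_⟩
  have heq : δ (φ b) x = φ (δ b x) := (hφ.2.2 b x).symm
  exact ⟨heq ▸ key _ hx, heq⟩
end
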